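/- Random walk with varying step size, hitting probability (Lemma C.1, first part): let ε ∈ (0,1), t₀ ∈ (0,1), let (X_j)_{j≥1} be an i.i.d. sequence of random variables each uniformly distributed on [−ε, ε], set t_j = t₀ + X₁ + … + X_j, and let τ = inf{ j ≥ 0 : t_j ∉ (0,1) }. Then τ < ∞ almost surely and P(t_τ ≤ 0) ≥ 1 − (t₀ + ε). -/

import Mathlib

set_option maxHeartbeats 1000000


open MeasureTheory Set
open scoped ENNReal

/-- **Random walk with varying step size, hitting probability (Lemma C.1, first part).**
Let `ε ∈ (0,1)`, `t₀ ∈ (0,1)`, `(X_j)_{j ≥ 1}` i.i.d. uniform on `[−ε, ε]`,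
`t_j = t₀ + X₁ + ⋯ + X_j` and `τ = inf{ j ≥ 0 : t_j ∉ (0,1) }`. Then `τ < ∞` almost
surely and `P(t_τ ≤ 0) ≥ 1 − (t₀ + ε)`. -/
theorem random_walk_hitting_probability
    {Ω' : Type*} [MeasurableSpace Ω'] (P : Measure Ω') [IsProbabilityMeasure P]
    (ε t₀ : ℝ) (hε : ε ∈ Set.Ioo (0 : ℝ) 1) (ht₀ : t₀ ∈ Set.Ioo (0 : ℝ) 1)
    (X : ℕ → Ω' → ℝ) (hXmeas : ∀ j, Measurable (X j))
    (hindep : ProbabilityTheory.iIndepFun X P)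
    (hunif : ∀ j, 1 ≤ j →
      Measure.map (X j) P = (ENNReal.ofReal (2 * ε))⁻¹ • volume.restrict (Set.Icc (-ε) ε))
    (t : ℕ → Ω' → ℝ) (ht : ∀ j ω, t j ω = t₀ + ∑ i ∈ Finset.range j, X (i + 1) ω)
    (τ : Ω' → ℕ) (hτ : ∀ ω, τ ω = sInf {j : ℕ | t j ω ∉ Set.Ioo (0 : ℝ) 1}) :
    (∀ᵐ ω ∂P, ∃ j : ℕ, t j ω ∉ Set.Ioo (0 : ℝ) 1) ∧
      ENNReal.ofReal (1 - (t₀ + ε)) ≤ P {ω | t (τ ω) ω ≤ 0} := by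
  classical
  obtain ⟨hε0, hε1⟩ := hε
  obtain ⟨ht00, ht01⟩ := ht₀
  -- measurability of the walk
  have htmeas : ∀ j, Measurable (t j) := by
    intro j
    have hj : t j = fun ω => t₀ + ∑ i ∈ Finset.range j, X (i + 1) ω := funext fun ω => ht j ω
    rw [hj]
    exact measurable_const.add (Finset.measurable_sum _ fun i _ => hXmeas _)
  -- basic facts about the uniform steps
  have hXae : ∀ j, 1 ≤ j → ∀ᵐ ω ∂P, X j ω ∈ Set.Icc (-ε) ε := by
    intro j hj
    rw [ae_iff]
    have h1 : {ω | ¬ X j ω ∈ Set.Icc (-ε) ε} = X j ⁻¹' (Set.Icc (-ε) ε)ᶜ := rfl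
    rw [h1, ← Measure.map_apply (hXmeas j) measurableSet_Icc.compl, hunif j hj]
    simp [Measure.restrict_apply measurableSet_Icc.compl]
  have hXmean : ∀ j, 1 ≤ j → ∫ ω, X j ω ∂P = 0 := by
    intro j hj
    have h0 : ∫ ω, X j ω ∂P = ∫ x, x ∂(Measure.map (X j) P) :=
      (integral_map (hXmeas j).aemeasurable aestronglyMeasurable_id).symm
    rw [h0, hunif j hj, integral_smul_measure]
    have h2 : ∫ x in Set.Icc (-ε) ε, x = 0 := by
      rw [MeasureTheory.integral_Icc_eq_integral_Ioc,
        ← intervalIntegral.integral_of_le (by linarith : -ε ≤ ε), integral_id]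
      ring
    rw [show (∫ x in Set.Icc (-ε) ε, x) = 0 from h2]
    simp
  have hq : ∀ j, 1 ≤ j → P (X j ⁻¹' Set.Ioi (ε/2)) = ENNReal.ofReal (1/4) := by
    intro j hj
    rw [← Measure.map_apply (hXmeas j) measurableSet_Ioi, hunif j hj,
      Measure.smul_apply, Measure.restrict_apply measurableSet_Ioi]
    have h1 : Set.Ioi (ε/2) ∩ Set.Icc (-ε) ε = Set.Ioc (ε/2) ε := by
      ext x
      simp only [Set.mem_inter_iff, Set.mem_Ioi, Set.mem_Icc, Set.mem_Ioc]
      constructor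
      · rintro ⟨h, _, h2⟩; exact ⟨h, h2⟩
      · rintro ⟨h, h2⟩; exact ⟨h, by linarith, h2⟩
    rw [h1, Real.volume_Ioc, smul_eq_mul,
      ← ENNReal.ofReal_inv_of_pos (by linarith), ← ENNReal.ofReal_mul (by positivity)]
    congr 1
    field_simp
    ring
  -- measurability of τ and of the stopped process
  have hC : ∀ j, MeasurableSet {ω | t j ω ∈ Set.Ioo (0:ℝ) 1} := fun j =>
    (htmeas j) measurableSet_Ioo
  have hτmeas : Measurable τ := by
    apply measurable_to_countable'
    intro k
    have hk : τ ⁻¹' {k} =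
        ({ω | t k ω ∈ Set.Ioo (0:ℝ) 1}ᶜ ∩ ⋂ j ∈ Set.Iio k, {ω | t j ω ∈ Set.Ioo (0:ℝ) 1})
        ∪ {ω | k = 0 ∧ ∀ j, t j ω ∈ Set.Ioo (0:ℝ) 1} := by
      ext ω
      simp only [Set.mem_preimage, Set.mem_singleton_iff, Set.mem_union, Set.mem_inter_iff,
        Set.mem_compl_iff, Set.mem_setOf_eq, Set.mem_iInter, Set.mem_Iio]
      rw [hτ ω]
      constructor
      · intro h
        by_cases hS : {j : ℕ | t j ω ∉ Set.Ioo (0:ℝ) 1}.Nonempty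
        · left
          have h1 : k ∈ {j : ℕ | t j ω ∉ Set.Ioo (0:ℝ) 1} := h ▸ Nat.sInf_mem hS
          refine ⟨h1, fun j hj => ?_⟩
          by_contra hj'
          have h2 : sInf {j : ℕ | t j ω ∉ Set.Ioo (0:ℝ) 1} ≤ j := Nat.sInf_le hj'
          omega
        · right
          rw [Set.not_nonempty_iff_eq_empty] at hS
          rw [hS, Nat.sInf_empty] at h
          refine ⟨h.symm, fun j => ?_⟩
          by_contra hj
          have hj2 : j ∈ {j : ℕ | t j ω ∉ Set.Ioo (0:ℝ) 1} := hj
          rw [hS] at hj2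
          exact hj2
      · rintro (⟨h1, h2⟩ | ⟨h1, h2⟩)
        · have hk1 : k ∈ {j : ℕ | t j ω ∉ Set.Ioo (0:ℝ) 1} := h1
          refine le_antisymm (Nat.sInf_le hk1) ?_
          by_contra hlt
          push_neg at hlt
          have h3 := Nat.sInf_mem (⟨k, hk1⟩ : {j : ℕ | t j ω ∉ Set.Ioo (0:ℝ) 1}.Nonempty)
          exact h3 (h2 _ hlt)
        · have h0 : {j : ℕ | t j ω ∉ Set.Ioo (0:ℝ) 1} = ∅ := by
            ext j
            simp only [Set.mem_setOf_eq, Set.mem_empty_iff_false, iff_false, not_not]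
            exact h2 j
          rw [h0, Nat.sInf_empty, h1]
    rw [hk]
    apply MeasurableSet.union
    · exact ((hC k).compl).inter (MeasurableSet.biInter (Set.to_countable _) fun j _ => hC j)
    · rcases Nat.eq_zero_or_pos k with h | h
      · have he : {ω | k = 0 ∧ ∀ j, t j ω ∈ Set.Ioo (0:ℝ) 1}
            = ⋂ j, {ω | t j ω ∈ Set.Ioo (0:ℝ) 1} := by
          ext ω; simp [h]
        rw [he]; exact MeasurableSet.iInter fun j => hC j
      · have he : {ω | k = 0 ∧ ∀ j, t j ω ∈ Set.Ioo (0:ℝ) 1} = ∅ := by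
          ext ω; simp [Nat.pos_iff_ne_zero.mp h]
        rw [he]; exact MeasurableSet.empty
  have hgp : Measurable (fun p : Ω' × ℕ => t p.2 p.1) :=
    measurable_from_prod_countable_left fun k => htmeas k
  have htτmeas : Measurable (fun ω => t (τ ω) ω) :=
    hgp.comp (measurable_id.prodMk hτmeas)
  have hZmeas : ∀ n, Measurable (fun ω => t (min (τ ω) n) ω) := fun n =>
    hgp.comp (measurable_id.prodMk
      ((measurable_from_top (f := fun k : ℕ => min k n)).comp hτmeas))
  -- σ-algebra machinery
  set mX : ℕ → MeasurableSpace Ω' := fun i => MeasurableSpace.comap (X i) inferInstance with hmX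
  have hindep' : ProbabilityTheory.iIndep mX P := hindep.iIndep
  have hle : ∀ i, mX i ≤ ‹MeasurableSpace Ω'› := fun i => (hXmeas i).comap_le
  have hXm : ∀ i, @Measurable _ _ (mX i) _ (X i) := fun i =>
    @measurable_iff_comap_le _ _ (mX i) _ (X i) |>.mpr le_rfl
  have hprod : ∀ (S T : Set ℕ) (A B' : Set Ω'), Disjoint S T →
      MeasurableSet[⨆ i ∈ S, mX i] A → MeasurableSet[⨆ i ∈ T, mX i] B' →
      P (A ∩ B') = P A * P B' := fun S T A B' hST hA hB' =>
    ((ProbabilityTheory.indep_iSup_of_disjoint hle hindep' hST).indepSet_of_measurableSet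
      hA hB').measure_inter_eq_mul
  have hXmS : ∀ (S : Set ℕ) (i : ℕ), i ∈ S → @Measurable _ _ (⨆ j ∈ S, mX j) _ (X i) :=
    fun S i hi => (hXm i).mono (le_biSup mX hi) le_rfl
  have htmS : ∀ (S : Set ℕ) (j : ℕ), (∀ i, 1 ≤ i → i ≤ j → i ∈ S) →
      @Measurable _ _ (⨆ i ∈ S, mX i) _ (t j) := by
    intro S j hS
    have hj : t j = fun ω => t₀ + ∑ i ∈ Finset.range j, X (i + 1) ω := funext fun ω => ht j ω
    rw [hj]
    refine Measurable.add measurable_const ?_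
    refine Finset.measurable_sum _ fun i hi => ?_
    exact hXmS S (i+1) (hS (i+1) (by omega) (by simp only [Finset.mem_range] at hi; omega))
  ---------------------------------------------------------------------------
  -- PART 1 : the walk exits (0,1) almost surely
  ---------------------------------------------------------------------------
  set N : Set Ω' := {ω | ∀ j, t j ω ∈ Set.Ioo (0:ℝ) 1} with hN
  set m : ℕ := max 1 ⌈2/ε⌉₊ with hm
  have hm1 : 1 ≤ m := le_max_left _ _
  have hm2 : (1:ℝ) ≤ (m:ℝ) * (ε/2) := by
    have h1 : (2/ε : ℝ) ≤ (⌈2/ε⌉₊ : ℝ) := Nat.le_ceil _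
    have h2 : ((⌈2/ε⌉₊ : ℕ) : ℝ) ≤ (m : ℝ) := by
      exact_mod_cast Nat.cast_le.mpr (le_max_right 1 _)
    have h3 : (2/ε : ℝ) ≤ (m:ℝ) := le_trans h1 h2
    calc (1:ℝ) = (2/ε) * (ε/2) := by field_simp
      _ ≤ (m:ℝ) * (ε/2) := by
          apply mul_le_mul_of_nonneg_right h3 (by linarith)
  set B : ℕ → Set Ω' := fun k => ⋂ i ∈ Finset.Ioc (k*m) ((k+1)*m), X i ⁻¹' Set.Ioi (ε/2)
    with hB
  have hBmeas : ∀ k, MeasurableSet (B k) := fun k =>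
    MeasurableSet.biInter (Finset.countable_toSet _)
      (fun i _ => (hXmeas i) measurableSet_Ioi)
  have hcard : ∀ k : ℕ, (k+1)*m - k*m = m := by intro k; have : (k+1)*m = k*m + m := by ring
                                                omega
  have hBP : ∀ k, P (B k) = ENNReal.ofReal (1/4) ^ m := by
    intro k
    have h1 : P (B k) = ∏ i ∈ Finset.Ioc (k*m) ((k+1)*m), P (X i ⁻¹' Set.Ioi (ε/2)) := by
      refine hindep.meas_biInter (S := Finset.Ioc (k*m) ((k+1)*m))
        (s := fun i => X i ⁻¹' Set.Ioi (ε/2)) ?_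
      intro i _
      exact ⟨Set.Ioi (ε/2), measurableSet_Ioi, rfl⟩
    rw [h1]
    have h2 : ∀ i ∈ Finset.Ioc (k*m) ((k+1)*m), P (X i ⁻¹' Set.Ioi (ε/2))
        = ENNReal.ofReal (1/4) := by
      intro i hi
      have : k*m < i := (Finset.mem_Ioc.mp hi).1
      exact hq i (by omega)
    rw [Finset.prod_congr rfl h2, Finset.prod_const, Nat.card_Ioc, hcard]
  -- on B k the walk crosses above 1 unless it has already left (0,1)
  have hNB : ∀ k, N ⊆ (B k)ᶜ := by
    intro k ω hω hBk
    have hsum : t ((k+1)*m) ω = t (k*m) ω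
        + ∑ i ∈ Finset.Ico (k*m) ((k+1)*m), X (i+1) ω := by
      rw [ht, ht, Finset.sum_Ico_eq_sub _ (Nat.mul_le_mul_right m (Nat.le_succ k))]
      ring
    have hlow : ∀ i ∈ Finset.Ico (k*m) ((k+1)*m), ε/2 < X (i+1) ω := by
      intro i hi
      obtain ⟨hi1, hi2⟩ := Finset.mem_Ico.mp hi
      have hmem : i + 1 ∈ Finset.Ioc (k*m) ((k+1)*m) := Finset.mem_Ioc.mpr ⟨by omega, by omega⟩
      have := Set.mem_iInter₂.mp hBk (i+1) hmem
      exact this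
    have hne : (Finset.Ico (k*m) ((k+1)*m)).Nonempty := by
      rw [Finset.nonempty_Ico]
      have : (k+1)*m = k*m + m := by ring
      omega
    have hsum2 : ∑ i ∈ Finset.Ico (k*m) ((k+1)*m), (ε/2)
        < ∑ i ∈ Finset.Ico (k*m) ((k+1)*m), X (i+1) ω :=
      Finset.sum_lt_sum_of_nonempty hne hlow
    rw [Finset.sum_const, Nat.card_Ico, hcard, nsmul_eq_mul] at hsum2
    have h01 := (hω (k*m)).1
    have h11 := (hω ((k+1)*m)).2
    have : (1:ℝ) < t ((k+1)*m) ω := by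
      rw [hsum]
      calc (1:ℝ) ≤ (m:ℝ) * (ε/2) := hm2
        _ < t (k*m) ω + ∑ i ∈ Finset.Ico (k*m) ((k+1)*m), X (i+1) ω := by
            have := hsum2
            linarith
    linarith
  -- independence of the blocks : P(D K) = (1 - (1/4)^m)^K
  set q : ℝ≥0∞ := ENNReal.ofReal (1/4) with hqdef
  set c : ℝ≥0∞ := 1 - q ^ m with hc
  have hBmS : ∀ (S : Set ℕ) (k : ℕ), (∀ i, k*m < i → i ≤ (k+1)*m → i ∈ S) →
      MeasurableSet[⨆ i ∈ S, mX i] (B k) := by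
    intro S k hS
    refine MeasurableSet.biInter (Finset.countable_toSet _) fun i hi => ?_
    obtain ⟨hi1, hi2⟩ := Finset.mem_Ioc.mp hi
    exact hXmS S i (hS i hi1 hi2) measurableSet_Ioi
  have hDP : ∀ K, P (⋂ k ∈ Finset.range K, (B k)ᶜ) = c ^ K := by
    intro K
    induction K with
    | zero => simp
    | succ K ih =>
      have hsplit : (⋂ k ∈ Finset.range (K+1), (B k)ᶜ)
          = (⋂ k ∈ Finset.range K, (B k)ᶜ) ∩ (B K)ᶜ := by
        rw [Finset.range_add_one, Finset.set_biInter_insert, Set.inter_comm]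
      rw [hsplit]
      have hmeasD : MeasurableSet[⨆ i ∈ {i : ℕ | i ≤ K*m}, mX i]
          (⋂ k ∈ Finset.range K, (B k)ᶜ) := by
        refine MeasurableSet.biInter (Finset.countable_toSet _) fun k hk => ?_
        refine (hBmS _ k ?_).compl
        intro i hi1 hi2
        have hkK : k + 1 ≤ K := Finset.mem_range.mp hk
        have : (k+1)*m ≤ K*m := Nat.mul_le_mul_right m hkK
        exact Set.mem_setOf_eq ▸ (by omega)
      have hmeasB : MeasurableSet[⨆ i ∈ {i : ℕ | K*m < i}, mX i] ((B K)ᶜ) := by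
        refine (hBmS _ K ?_).compl
        intro i hi1 _
        exact hi1
      have hdisj : Disjoint {i : ℕ | i ≤ K*m} {i : ℕ | K*m < i} := by
        rw [Set.disjoint_left]
        intro i hi1 hi2
        simp only [Set.mem_setOf_eq] at hi1 hi2
        omega
      rw [hprod _ _ _ _ hdisj hmeasD hmeasB, ih,
        prob_compl_eq_one_sub (hBmeas K), hBP K]
      ring
  have hclt : c < 1 := by
    refine ENNReal.sub_lt_self ENNReal.one_ne_top one_ne_zero ?_
    exact pow_ne_zero m (ENNReal.ofReal_pos.mpr (by norm_num)).ne'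
  have hNmeas : MeasurableSet N := by
    have : N = ⋂ j, {ω | t j ω ∈ Set.Ioo (0:ℝ) 1} := by
      ext ω; simp [hN]
    rw [this]; exact MeasurableSet.iInter fun j => hC j
  have hN0 : P N = 0 := by
    have hle' : ∀ K, P N ≤ c ^ K := by
      intro K
      have hsub : N ⊆ ⋂ k ∈ Finset.range K, (B k)ᶜ :=
        Set.subset_iInter₂ fun k _ => hNB k
      calc P N ≤ P (⋂ k ∈ Finset.range K, (B k)ᶜ) := measure_mono hsub
        _ = c ^ K := hDP K
    have htend : Filter.Tendsto (fun K => c ^ K) Filter.atTop (nhds 0) :=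
      ENNReal.tendsto_pow_atTop_nhds_zero_of_lt_one hclt
    exact le_antisymm (ge_of_tendsto' htend hle') zero_le
  have part1 : ∀ᵐ ω ∂P, ∃ j : ℕ, t j ω ∉ Set.Ioo (0:ℝ) 1 := by
    rw [ae_iff]
    have : {ω | ¬ ∃ j : ℕ, t j ω ∉ Set.Ioo (0:ℝ) 1} = N := by
      ext ω
      simp only [Set.mem_setOf_eq, not_exists, not_not, hN]
    rw [this]
    exact hN0
  refine ⟨part1, ?_⟩
  ---------------------------------------------------------------------------
  -- PART 2 : optional stopping by hand
  ---------------------------------------------------------------------------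
  -- independence gives vanishing stopped increments
  set A : ℕ → Set Ω' := fun n => ⋂ j ∈ Set.Iic n, {ω | t j ω ∈ Set.Ioo (0:ℝ) 1} with hA
  have hAmeas : ∀ n, MeasurableSet (A n) := fun n =>
    MeasurableSet.biInter (Set.to_countable _) fun j _ => hC j
  have hXint : ∀ j, 1 ≤ j → Integrable (X j) P := by
    intro j hj
    refine (integrable_const ε).mono' (hXmeas j).aestronglyMeasurable ?_
    filter_upwards [hXae j hj] with ω hω
    rw [Real.norm_eq_abs, abs_le]
    exact ⟨hω.1, hω.2⟩
  have hint0 : ∀ n, ∫ ω in A n, X (n+1) ω ∂P = 0 := by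
    intro n
    have hAS : MeasurableSet[⨆ i ∈ {i : ℕ | i ≤ n}, mX i] (A n) := by
      refine MeasurableSet.biInter (Set.to_countable _) fun j hj => ?_
      have hj' : j ≤ n := hj
      exact (htmS {i : ℕ | i ≤ n} j (fun i _ hi2 => show i ≤ n by omega)) measurableSet_Ioo
    have hInd : ∀ B' : Set ℝ, MeasurableSet B' →
        P (A n ∩ X (n+1) ⁻¹' B') = P (A n) * P (X (n+1) ⁻¹' B') := by
      intro B' hB'
      refine hprod {i : ℕ | i ≤ n} {n+1} _ _ ?_ hAS ?_
      · rw [Set.disjoint_left]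
        intro i h1 h2
        simp only [Set.mem_setOf_eq] at h1
        simp only [Set.mem_singleton_iff] at h2
        omega
      · exact hXmS {n+1} (n+1) (Set.mem_singleton _) hB'
    have hmap : Measure.map (X (n+1)) (P.restrict (A n))
        = P (A n) • Measure.map (X (n+1)) P := by
      ext B' hB'
      rw [Measure.map_apply (hXmeas _) hB', Measure.restrict_apply ((hXmeas _) hB'),
        Set.inter_comm, hInd B' hB', Measure.smul_apply, Measure.map_apply (hXmeas _) hB',
        smul_eq_mul]
    have h1 : ∫ ω in A n, X (n+1) ω ∂P
        = ∫ x, x ∂(Measure.map (X (n+1)) (P.restrict (A n))) :=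
      (integral_map (hXmeas _).aemeasurable aestronglyMeasurable_id).symm
    have h2 : ∫ x, x ∂(Measure.map (X (n+1)) P) = 0 := by
      have h0 : ∫ ω, X (n+1) ω ∂P = ∫ x, x ∂(Measure.map (X (n+1)) P) :=
        (integral_map (hXmeas _).aemeasurable aestronglyMeasurable_id).symm
      rw [← h0]
      exact hXmean (n+1) (by omega)
    rw [h1, hmap, integral_smul_measure, h2]
    simp
  -- the stopped process
  set Z : ℕ → Ω' → ℝ := fun n ω => t (min (τ ω) n) ω with hZ
  have hstep : ∀ j ω, t (j+1) ω = t j ω + X (j+1) ω := by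
    intro j ω
    rw [ht, ht, Finset.sum_range_succ]
    ring
  have ht0 : ∀ ω, t 0 ω = t₀ := by
    intro ω
    rw [ht]
    simp
  have hG : ∀ᵐ ω ∂P, (∀ j, X (j+1) ω ∈ Set.Icc (-ε) ε)
      ∧ ∃ j, t j ω ∉ Set.Ioo (0:ℝ) 1 :=
    (ae_all_iff.mpr fun j => hXae (j+1) (by omega)).and part1
  have hmain : ∀ ω, (∀ j, X (j+1) ω ∈ Set.Icc (-ε) ε) →
      (∃ j, t j ω ∉ Set.Ioo (0:ℝ) 1) →
      (∀ n, Z n ω ∈ Set.Icc (-ε) (1+ε)) ∧ (t (τ ω) ω ∉ Set.Ioo (0:ℝ) 1) ∧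
        (∀ j, j < τ ω → t j ω ∈ Set.Ioo (0:ℝ) 1) := by
    intro ω hXb hne
    have hne' : {j : ℕ | t j ω ∉ Set.Ioo (0:ℝ) 1}.Nonempty := hne
    have hτmem : t (τ ω) ω ∉ Set.Ioo (0:ℝ) 1 := by
      have h := Nat.sInf_mem hne'
      rw [← hτ ω] at h
      exact h
    have hless : ∀ j, j < τ ω → t j ω ∈ Set.Ioo (0:ℝ) 1 := by
      intro j hj
      by_contra hbad
      have h2 := Nat.sInf_le (show j ∈ {j : ℕ | t j ω ∉ Set.Ioo (0:ℝ) 1} from hbad)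
      rw [← hτ ω] at h2
      omega
    refine ⟨?_, hτmem, hless⟩
    intro n
    rcases Nat.eq_zero_or_pos (min (τ ω) n) with h0 | hpos
    · show t (min (τ ω) n) ω ∈ _
      rw [h0, ht0]
      exact ⟨by linarith, by linarith⟩
    · obtain ⟨j, hj⟩ := Nat.exists_eq_succ_of_ne_zero (Nat.pos_iff_ne_zero.mp hpos)
      show t (min (τ ω) n) ω ∈ _
      rw [hj, hstep]
      have hjτ : j < τ ω := by
        have := min_le_left (τ ω) n
        omega
      have h1 := hless j hjτ
      have h2 := hXb j
      simp only [Set.mem_Ioo] at h1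
      simp only [Set.mem_Icc] at h2
      exact ⟨by linarith, by linarith⟩
  have hrec : ∀ n, ∀ᵐ ω ∂P, Z (n+1) ω = Z n ω + (A n).indicator (X (n+1)) ω := by
    intro n
    filter_upwards [hG] with ω hω'
    obtain ⟨hXb, hne⟩ := hω'
    have hne' : {j : ℕ | t j ω ∉ Set.Ioo (0:ℝ) 1}.Nonempty := hne
    by_cases hω : ω ∈ A n
    · have hτgt : n < τ ω := by
        by_contra hle'
        push_neg at hle'
        have hτm := Nat.sInf_mem hne'
        rw [← hτ ω] at hτm
        exact hτm (Set.mem_iInter₂.mp hω (τ ω) hle')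
      have e1 : min (τ ω) n = n := min_eq_right (by omega)
      have e2 : min (τ ω) (n+1) = n+1 := min_eq_right (by omega)
      rw [Set.indicator_of_mem hω]
      show t (min (τ ω) (n+1)) ω = t (min (τ ω) n) ω + X (n+1) ω
      rw [e1, e2, hstep]
    · have hex : ∃ j ≤ n, t j ω ∉ Set.Ioo (0:ℝ) 1 := by
        by_contra hno
        push_neg at hno
        exact hω (Set.mem_iInter₂.mpr fun j hj => hno j hj)
      obtain ⟨j, hjn, hjbad⟩ := hex
      have hτle : τ ω ≤ n := by
        have h2 := Nat.sInf_le (show j ∈ {j : ℕ | t j ω ∉ Set.Ioo (0:ℝ) 1} from hjbad)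
        rw [← hτ ω] at h2
        omega
      have e1 : min (τ ω) n = τ ω := min_eq_left (by omega)
      have e2 : min (τ ω) (n+1) = τ ω := min_eq_left (by omega)
      rw [Set.indicator_of_notMem hω]
      show t (min (τ ω) (n+1)) ω = t (min (τ ω) n) ω + 0
      rw [e1, e2, add_zero]
  have hbae : ∀ᵐ ω ∂P, ∀ n, Z n ω ∈ Set.Icc (-ε) (1+ε) := by
    filter_upwards [hG] with ω hω
    exact (hmain ω hω.1 hω.2).1
  have hZint : ∀ n, Integrable (Z n) P := by
    intro n
    refine (integrable_const (1+ε)).mono' (hZmeas n).aestronglyMeasurable ?_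
    filter_upwards [hbae] with ω hω
    have h := hω n
    rw [Real.norm_eq_abs, abs_le]
    simp only [Set.mem_Icc] at h
    exact ⟨by linarith, by linarith⟩
  have hZn : ∀ n, ∫ ω, Z n ω ∂P = t₀ := by
    intro n
    induction n with
    | zero =>
      have he : (fun ω => Z 0 ω) = fun _ => t₀ := by
        funext ω
        show t (min (τ ω) 0) ω = t₀
        rw [Nat.min_zero, ht0]
      rw [he]
      simp
    | succ n ih =>
      have hcongr : ∫ ω, Z (n+1) ω ∂P
          = ∫ ω, (Z n ω + (A n).indicator (X (n+1)) ω) ∂P :=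
        integral_congr_ae (hrec n)
      rw [hcongr, integral_add (hZint n) ((hXint (n+1) (by omega)).indicator (hAmeas n)),
        integral_indicator (hAmeas n), hint0 n, ih, add_zero]
  have hlim : ∀ᵐ ω ∂P, Filter.Tendsto (fun n => Z n ω) Filter.atTop (nhds (t (τ ω) ω)) := by
    filter_upwards [hG] with ω hω
    apply tendsto_atTop_of_eventually_const (i₀ := τ ω)
    intro n hn
    show t (min (τ ω) n) ω = t (τ ω) ω
    rw [min_eq_left hn]
  have hItτ : ∫ ω, t (τ ω) ω ∂P = t₀ := by
    have hdct := MeasureTheory.tendsto_integral_of_dominated_convergence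
      (F := fun n ω => Z n ω) (f := fun ω => t (τ ω) ω) (bound := fun _ => 1+ε)
      (fun n => (hZmeas n).aestronglyMeasurable) (integrable_const _)
      (fun n => by
        filter_upwards [hbae] with ω hω
        have h := hω n
        rw [Real.norm_eq_abs, abs_le]
        simp only [Set.mem_Icc] at h
        exact ⟨by linarith, by linarith⟩) hlim
    have h2 : Filter.Tendsto (fun n : ℕ => ∫ ω, Z n ω ∂P) Filter.atTop (nhds t₀) := by
      have he : (fun n : ℕ => ∫ ω, Z n ω ∂P) = fun _ => t₀ := funext hZn
      rw [he]
      exact tendsto_const_nhds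
    exact tendsto_nhds_unique hdct h2
  -- final bound
  set A₀ : Set Ω' := {ω | t (τ ω) ω ≤ 0} with hA₀def
  have hA₀ : MeasurableSet A₀ := htτmeas measurableSet_Iic
  have htτb : ∀ᵐ ω ∂P, t (τ ω) ω ∈ Set.Icc (-ε) (1+ε) := by
    filter_upwards [hbae] with ω hω
    have h := hω (τ ω)
    show t (τ ω) ω ∈ _
    rw [← min_self (τ ω)]
    exact h
  have htτint : Integrable (fun ω => t (τ ω) ω) P := by
    refine (integrable_const (1+ε)).mono' htτmeas.aestronglyMeasurable ?_
    filter_upwards [htτb] with ω hω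
    rw [Real.norm_eq_abs, abs_le]
    simp only [Set.mem_Icc] at hω
    exact ⟨by linarith, by linarith⟩
  have hge1 : ∀ᵐ ω ∂P, ω ∈ A₀ᶜ → 1 ≤ t (τ ω) ω := by
    filter_upwards [hG] with ω hω hmemc
    have hnot := (hmain ω hω.1 hω.2).2.1
    have hpos : 0 < t (τ ω) ω := by
      simp only [hA₀def, Set.mem_compl_iff, Set.mem_setOf_eq, not_le] at hmemc
      exact hmemc
    by_contra hlt
    push_neg at hlt
    exact hnot ⟨hpos, hlt⟩
  have hI1 : (P A₀).toReal * (-ε) ≤ ∫ ω in A₀, t (τ ω) ω ∂P := by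
    have h := MeasureTheory.setIntegral_mono_ae_restrict (s := A₀)
      (integrable_const (-ε)).integrableOn htτint.integrableOn
      (ae_restrict_of_ae (by filter_upwards [htτb] with ω hω; exact hω.1))
    rwa [MeasureTheory.setIntegral_const, smul_eq_mul] at h
  have hI2 : (P A₀ᶜ).toReal * 1 ≤ ∫ ω in A₀ᶜ, t (τ ω) ω ∂P := by
    have h := MeasureTheory.setIntegral_mono_ae_restrict (s := A₀ᶜ)
      (integrable_const 1).integrableOn htτint.integrableOn
      ((ae_restrict_iff' hA₀.compl).mpr hge1)
    rwa [MeasureTheory.setIntegral_const, smul_eq_mul] at h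
  have hsplit2 : ∫ ω in A₀, t (τ ω) ω ∂P + ∫ ω in A₀ᶜ, t (τ ω) ω ∂P = t₀ := by
    rw [integral_add_compl hA₀ htτint]
    exact hItτ
  have hpc : (P A₀ᶜ).toReal = 1 - (P A₀).toReal := by
    rw [prob_compl_eq_one_sub hA₀,
      ENNReal.toReal_sub_of_le prob_le_one ENNReal.one_ne_top, ENNReal.toReal_one]
  have hp1 : (P A₀).toReal ≤ 1 := by
    simpa using ENNReal.toReal_mono ENNReal.one_ne_top (prob_le_one (μ := P) (s := A₀))
  have hp0 : 0 ≤ (P A₀).toReal := ENNReal.toReal_nonneg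
  have hkey : 1 - (t₀ + ε) ≤ (P A₀).toReal := by
    rw [hpc] at hI2
    nlinarith [hI1, hI2, hsplit2]
  calc ENNReal.ofReal (1 - (t₀ + ε)) ≤ ENNReal.ofReal ((P A₀).toReal) :=
        ENNReal.ofReal_le_ofReal hkey
    _ = P A₀ := ENNReal.ofReal_toReal (measure_ne_top P A₀)
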